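/- Let p be a prime, s ∈ ℤ_{≥1}, a_0,…,a_{r−1} ∈ ℤ_p, and put h(t) := Π_{i=0}^{r−1} F_{a_i,…,a_i}(t)_{<p} ∈ ℤ_p[t]. Then for every n ≥ 1 the Laurent polynomial h(t^{−1}) is a unit in R_n := (W/p^nW)[t, t^{−1}, h(t)^{−1}]; consequently there is a ring homomorphism ω_n: R_n → R_n over W/p^nW with ω_n(f(t)) = f(t^{−1}) for Laurent polynomials f, and the ω_n are compatible with the reductions R_{n+1} → R_n and induce a ring involution ω of W⟨t, t^{−1}, h(t)^{−1}⟩ := lim←_n R_n with ω(f(t)) = f(t^{−1}). -/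

import Mathlib

open scoped Classical

set_option maxHeartbeats 1000000
set_option synthInstance.maxHeartbeats 400000

namespace HGP

/-- `𝔽̄_p`, an algebraic closure of the prime field `𝔽_p`. -/
abbrev Fbar (p : ℕ) [Fact p.Prime] : Type _ := AlgebraicClosure (ZMod p)

/-- `W = W(𝔽̄_p)`, the ring of Witt vectors of `𝔽̄_p`. -/
abbrev Wp (p : ℕ) [Fact p.Prime] : Type _ := WittVector p (Fbar p)

/-- `K = Frac W`. -/
abbrev Kp (p : ℕ) [Fact p.Prime] : Type _ := FractionRing (Wp p)

/-- The canonical embedding `ℤ_p = W(𝔽_p) → W(𝔽̄_p)`. -/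
noncomputable def iota (p : ℕ) [Fact p.Prime] : ℤ_[p] →+* Wp p :=
  (WittVector.map (algebraMap (ZMod p) (Fbar p))).comp (WittVector.equiv p).symm.toRingHom

/-- The canonical embedding `W → K`. -/
noncomputable def iotaK (p : ℕ) [Fact p.Prime] : Wp p →+* Kp p := algebraMap (Wp p) (Kp p)

/-- `l`: the unique integer in `{0,…,p−1}` with `a + l ≡ 0 mod p`. -/
noncomputable def dl (p : ℕ) [Fact p.Prime] (a : ℤ_[p]) : ℕ := (-a).appr 1

/-- `q := 4` if `p = 2` and `q := p` otherwise. -/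
def qq (p : ℕ) : ℕ := if p = 2 then 4 else p

/-- `l′`: the unique integer in `{0,…,q−1}` with `a + l′ ≡ 0 mod q`. -/
noncomputable def dl' (p : ℕ) [Fact p.Prime] (a : ℤ_[p]) : ℕ :=
  (-a).appr (if p = 2 then 2 else 1)

/-- `e := l′ − ⌊l′/p⌋`. -/
noncomputable def de (p : ℕ) [Fact p.Prime] (a : ℤ_[p]) : ℕ := dl' p a - dl' p a / p

/-- `a ∈ ℤ_p ∖ ℤ_{≤0}`, i.e. `a` is not a nonpositive rational integer. -/
def NotNonposInt (p : ℕ) [Fact p.Prime] (a : ℤ_[p]) : Prop := ∀ n : ℕ, a + (n : ℤ_[p]) ≠ 0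

/-- `a′` is the Dwork prime of `a`, i.e. `p·a′ = a + l`. -/
def IsDworkPrime (p : ℕ) [Fact p.Prime] (a a' : ℤ_[p]) : Prop :=
  (p : ℤ_[p]) * a' = a + (dl p a : ℤ_[p])

/-- `A k = ((a)_k / k!)^s ∈ ℤ_p`, characterized by `k!^s · A k = ((a)_k)^s`. -/
def IsHGCoeff (p : ℕ) [Fact p.Prime] (s : ℕ) (a : ℤ_[p]) (A : ℕ → ℤ_[p]) : Prop :=
  ∀ k : ℕ, (k.factorial : ℤ_[p]) ^ s * A k = ((ascPochhammer ℤ_[p] k).eval a) ^ s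

/-- `f = (α ↦ c^α)` for `c ∈ 1 + pW`: `c^α` is uniquely characterized by
`c^α ≡ c^{α_n} mod p^n W` for any natural approximation `α_n` of `α` mod `p^n`. -/
def IsCpow (p : ℕ) [Fact p.Prime] (c : Wp p) (f : ℤ_[p] → Wp p) : Prop :=
  ∀ (α : ℤ_[p]) (n : ℕ), f α - c ^ (α.appr n) ∈ Ideal.span {(p : Wp p) ^ n}

/-- The coefficients `B_k` of `Ĝ^{(σ)}_{a,…,a}(t)`, as elements of `K = Frac W`:
`B_k = (k+a)⁻¹ (A_k − (−1)^{se} A^{(1)}_{(k−l)/p} c^{(k−l)/p + a′})`. -/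
noncomputable def BhatK (p : ℕ) [Fact p.Prime] (s : ℕ) (a a' : ℤ_[p]) (A A1 : ℕ → ℤ_[p])
    (cpw : ℤ_[p] → Wp p) (k : ℕ) : Kp p :=
  ((k : Kp p) + iotaK p (iota p a))⁻¹ *
    (iotaK p (iota p (A k)) -
      (if dl p a ≤ k ∧ p ∣ (k - dl p a) then
        (-1 : Kp p) ^ (s * de p a) * iotaK p (iota p (A1 ((k - dl p a) / p))) *
          iotaK p (cpw ((((k - dl p a) / p : ℕ) : ℤ_[p]) + a'))
      else 0))

/-- `B : ℕ → W` is the coefficient function of `Ĝ^{(σ)}_{a,…,a}(t)`, characterized in `W` by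
`(k+a)·B_k = A_k − (−1)^{se} A^{(1)}_{(k−l)/p} c^{(k−l)/p + a′}`. -/
def IsBhat (p : ℕ) [Fact p.Prime] (s : ℕ) (a a' : ℤ_[p]) (A A1 : ℕ → ℤ_[p])
    (cpw : ℤ_[p] → Wp p) (B : ℕ → Wp p) : Prop :=
  ∀ k : ℕ, ((k : Wp p) + iota p a) * B k =
    iota p (A k) -
      (if dl p a ≤ k ∧ p ∣ (k - dl p a) then
        (-1 : Wp p) ^ (s * de p a) * iota p (A1 ((k - dl p a) / p)) *
          cpw ((((k - dl p a) / p : ℕ) : ℤ_[p]) + a')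
      else 0)

/-- A function `ℕ → K` is Lipschitz: it takes values in `W` and
`p^m ∣ (n − n′)` implies `f n − f n′ ∈ p^m W`. -/
def LipschitzSeq (p : ℕ) [Fact p.Prime] (f : ℕ → Kp p) : Prop :=
  (∀ n : ℕ, f n ∈ (iotaK p).range) ∧
    ∀ n n' m : ℕ, ((p : ℤ) ^ m ∣ (n : ℤ) - (n' : ℤ)) →
      ∃ w : Wp p, f n - f n' = (p : Kp p) ^ m * iotaK p w

/-- `L` is the `p`-adic limit of the sequence `s` in `W`. -/
def WLim (p : ℕ) [Fact p.Prime] (s : ℕ → Wp p) (L : Wp p) : Prop :=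
  ∀ m : ℕ, ∃ M : ℕ, ∀ n ≥ M, L - s n ∈ Ideal.span {(p : Wp p) ^ m}

/-- `{α}_k := Π_{1 ≤ i ≤ k, p ∤ (α+i−1)} (α+i−1)`. -/
noncomputable def curly (p : ℕ) [Fact p.Prime] (α : ℤ_[p]) (k : ℕ) : ℤ_[p] :=
  ∏ j ∈ Finset.range k, if (p : ℤ_[p]) ∣ (α + (j : ℤ_[p])) then 1 else (α + (j : ℤ_[p]))

/-- `W/p^n W`. -/
abbrev Qn (p : ℕ) [Fact p.Prime] (n : ℕ) := Wp p ⧸ Ideal.span {(p : Wp p) ^ n}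

/-- Laurent polynomials over `W/p^n`, obtained from polynomials over `W`. -/
noncomputable def laurentOfPolyW (p : ℕ) [Fact p.Prime] (n : ℕ) :
    Polynomial (Wp p) →+* LaurentPolynomial (Qn p n) :=
  (Polynomial.toLaurent).comp
    (Polynomial.mapRingHom (Ideal.Quotient.mk (Ideal.span {(p : Wp p) ^ n})))

/-- `R_n := (W/p^n)[t,t⁻¹, h(t)⁻¹]`, the localization of the Laurent polynomial ring
over `W/p^n` away from (the image of) `h`. -/
abbrev Rn (p : ℕ) [Fact p.Prime] (h : Polynomial (Wp p)) (n : ℕ) :=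
  Localization.Away (laurentOfPolyW p n h)

/-- The canonical map from Laurent polynomials over `W/p^n` to `R_n`. -/
noncomputable def mkRn (p : ℕ) [Fact p.Prime] (h : Polynomial (Wp p)) (n : ℕ) :
    LaurentPolynomial (Qn p n) →+* Rn p h n := algebraMap _ _

/-- The canonical map from polynomials over `W` to `R_n`. -/
noncomputable def toRn (p : ℕ) [Fact p.Prime] (h : Polynomial (Wp p)) (n : ℕ) :
    Polynomial (Wp p) →+* Rn p h n := (mkRn p h n).comp (laurentOfPolyW p n)


section Aux

variable {p : ℕ} [Fact p.Prime] {s : ℕ} {a : ℤ_[p]} {A : ℕ → ℤ_[p]}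


lemma dl_lt (a : ℤ_[p]) : dl p a < p := by simpa [dl] using PadicInt.appr_lt (-a) 1

lemma toZMod_dl (a : ℤ_[p]) : PadicInt.toZMod a = -(dl p a : ZMod p) := by
  have h := PadicInt.appr_spec 1 (-a)
  rw [pow_one, ← PadicInt.maximalIdeal_eq_span_p, ← PadicInt.ker_toZMod, RingHom.mem_ker] at h
  have := (map_sub PadicInt.toZMod (-a) _).symm.trans h
  rw [sub_eq_zero] at this
  simpa [eq_comm, neg_eq_iff_eq_neg, dl] using this

lemma padic_cong {x y : ℤ_[p]} (h : PadicInt.toZMod x = PadicInt.toZMod y) :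
    ∃ z : ℤ_[p], x = y + p * z := by
  have hm : x - y ∈ RingHom.ker (PadicInt.toZMod (p := p)) := by
    rw [RingHom.mem_ker, map_sub, h, sub_self]
  rw [PadicInt.ker_toZMod, PadicInt.maximalIdeal_eq_span_p, Ideal.mem_span_singleton] at hm
  obtain ⟨z, hz⟩ := hm
  exact ⟨z, by linear_combination hz⟩

lemma fact_ne_zero {k : ℕ} (hk : k < p) : ((k.factorial : ZMod p) : ZMod p) ≠ 0 := by
  rw [Ne, ZMod.natCast_eq_zero_iff]
  intro hdvd
  exact absurd ((Fact.out : p.Prime).dvd_factorial.mp hdvd) (not_le.mpr hk)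

lemma phiA (hA : IsHGCoeff p s a A) (k : ℕ) :
    ((k.factorial : ZMod p)) ^ s * PadicInt.toZMod (A k) =
      ((ascPochhammer (ZMod p) k).eval (-(dl p a : ZMod p))) ^ s := by
  have h := congrArg PadicInt.toZMod (hA k)
  rw [map_mul, map_pow, map_natCast, map_pow] at h
  rw [h]
  congr 1
  rw [← toZMod_dl a, ← ascPochhammer_map (PadicInt.toZMod (p := p)) k, Polynomial.eval_map,
    Polynomial.eval₂_at_apply]

-- value of ascPochhammer at -l
lemma poch_at_neg (l j : ℕ) (hj : j ≤ l) :
    (ascPochhammer (ZMod p) j).eval (-(l : ZMod p)) = (-1) ^ j * (l.descFactorial j : ZMod p) := by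
  rw [ascPochhammer_eval_neg_eq_descPochhammer]
  congr 1
  have := descPochhammer_eval_eq_descFactorial (ZMod p) l j
  exact this

lemma phiA_l (hs : 1 ≤ s) (hA : IsHGCoeff p s a A) :
    PadicInt.toZMod (A (dl p a)) = (-1 : ZMod p) ^ (s * dl p a) := by
  set l := dl p a with hl
  have h := phiA hA l
  rw [poch_at_neg l l le_rfl, Nat.descFactorial_self, mul_pow, ← pow_mul, mul_comm l s] at h
  have hfact := fact_ne_zero (dl_lt a)
  have : ((l.factorial : ZMod p)) ^ s ≠ 0 := pow_ne_zero _ hfact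
  exact mul_left_cancel₀ this (h.trans (mul_comm _ _))






lemma isUnit_A_l (hs : 1 ≤ s) (hA : IsHGCoeff p s a A) : IsUnit (A (dl p a)) := by
  by_contra hu
  have hmem : A (dl p a) ∈ IsLocalRing.maximalIdeal ℤ_[p] := hu
  rw [← PadicInt.ker_toZMod, RingHom.mem_ker, phiA_l hs hA] at hmem
  exact (IsUnit.ne_zero (isUnit_one.neg.pow _)) hmem

lemma A_vanish (hs : 1 ≤ s) (hA : IsHGCoeff p s a A) {k : ℕ} (hlk : dl p a < k) (hkp : k < p) :
    ∃ z : ℤ_[p], A k = 0 + p * z := by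
  apply padic_cong
  have h := phiA hA k
  rw [ascPochhammer_eval_neg_coe_nat_of_lt hlk, zero_pow (by omega)] at h
  have hfact : ((k.factorial : ZMod p)) ^ s ≠ 0 := pow_ne_zero _ (fact_ne_zero hkp)
  rw [map_zero]
  exact (mul_eq_zero.mp h).resolve_left hfact

lemma A_reflect (hs : 1 ≤ s) (hA : IsHGCoeff p s a A) {k : ℕ} (hk : k ≤ dl p a) :
    ∃ z : ℤ_[p], A (dl p a - k) = A (dl p a) * A k + p * z := by
  apply padic_cong
  set l := dl p a with hldef
  have hlp : l < p := dl_lt a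
  have hkp : k < p := lt_of_le_of_lt hk hlp
  have hlkp : l - k < p := lt_of_le_of_lt (Nat.sub_le _ _) hlp
  have hne : ∀ m, m < p → ((m.factorial : ZMod p)) ^ s ≠ 0 := fun m hm =>
    pow_ne_zero _ (fact_ne_zero hm)
  -- key field identity
  have key : ((l.factorial : ZMod p) * (k.factorial : ZMod p) *
        (ascPochhammer (ZMod p) (l - k)).eval (-(l : ZMod p))) =
      (((l - k).factorial : ZMod p) *
        ((ascPochhammer (ZMod p) l).eval (-(l : ZMod p)) *
          (ascPochhammer (ZMod p) k).eval (-(l : ZMod p)))) := by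
    rw [poch_at_neg l (l - k) (Nat.sub_le _ _), poch_at_neg l l le_rfl,
      poch_at_neg l k hk]
    have h1 : (k.factorial * l.descFactorial (l - k) : ℕ) = l.factorial := by
      have := Nat.factorial_mul_descFactorial (Nat.sub_le l k)
      rwa [Nat.sub_sub_self hk] at this
    have h2 : ((l - k).factorial * l.descFactorial k : ℕ) = l.factorial := by
      exact Nat.factorial_mul_descFactorial hk
    have hsign : ((-1 : ZMod p)) ^ (l - k) * (-1) ^ k = (-1) ^ l := by
      rw [← pow_add]
      congr 1
      omega
    calc (l.factorial : ZMod p) * (k.factorial : ZMod p) *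
          ((-1) ^ (l - k) * (l.descFactorial (l - k) : ZMod p))
        = (-1) ^ (l - k) * ((l.factorial : ZMod p) *
            ((k.factorial * l.descFactorial (l - k) : ℕ) : ZMod p)) := by push_cast; ring
      _ = (-1) ^ (l - k) * ((l.factorial : ZMod p) * (l.factorial : ZMod p)) := by rw [h1]
      _ = ((l - k).factorial : ZMod p) * ((-1) ^ l * l.descFactorial l *
            ((-1) ^ k * l.descFactorial k)) := by
            rw [Nat.descFactorial_self]
            have hsign2 : ((-1 : ZMod p)) ^ (l - k) = (-1) ^ (l + k) := by
              have hlk2 : l + k = (l - k) + 2 * k := by omega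
              rw [hlk2, pow_add, pow_mul, neg_one_sq, one_pow, mul_one]
            have h2' : (((l - k).factorial : ZMod p)) * (l.descFactorial k : ZMod p) =
                (l.factorial : ZMod p) := by rw [← Nat.cast_mul, h2]
            rw [hsign2, pow_add]
            calc (-1:ZMod p)^l * (-1)^k * ((l.factorial:ZMod p) * l.factorial)
                = ((-1:ZMod p)^l * (l.factorial:ZMod p)) * ((-1)^k *
                    ((((l-k).factorial : ZMod p)) * (l.descFactorial k : ZMod p))) := by
                  rw [h2']; ring
              _ = _ := by ring
  -- now cancel
  have hX := phiA hA (l - k)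
  have hY := phiA hA l
  have hZ := phiA hA k
  have main : (((l-k).factorial : ZMod p))^s * ((l.factorial : ZMod p))^s * ((k.factorial : ZMod p))^s
      * PadicInt.toZMod (A (l - k)) =
      (((l-k).factorial : ZMod p))^s * ((l.factorial : ZMod p))^s * ((k.factorial : ZMod p))^s
      * (PadicInt.toZMod (A l) * PadicInt.toZMod (A k)) := by
    calc _ = ((l.factorial : ZMod p))^s * ((k.factorial : ZMod p))^s *
            ((((l-k).factorial : ZMod p))^s * PadicInt.toZMod (A (l - k))) := by ring
      _ = ((l.factorial : ZMod p) * (k.factorial : ZMod p) *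
            (ascPochhammer (ZMod p) (l - k)).eval (-(l : ZMod p)))^s := by rw [hX]; ring
      _ = (((l - k).factorial : ZMod p) *
            ((ascPochhammer (ZMod p) l).eval (-(l : ZMod p)) *
              (ascPochhammer (ZMod p) k).eval (-(l : ZMod p))))^s := by rw [key]
      _ = (((l-k).factorial : ZMod p))^s *
            (((ascPochhammer (ZMod p) l).eval (-(l : ZMod p)))^s *
              ((ascPochhammer (ZMod p) k).eval (-(l : ZMod p)))^s) := by rw [mul_pow, mul_pow]
      _ = _ := by rw [← hY, ← hZ]; ring
  rw [map_mul]
  have hmul : (((l-k).factorial : ZMod p))^s * ((l.factorial : ZMod p))^s * ((k.factorial : ZMod p))^s ≠ 0 :=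
    mul_ne_zero (mul_ne_zero (hne _ hlkp) (hne _ hlp)) (hne _ hkp)
  have := mul_left_cancel₀ hmul main
  simpa using this





open LaurentPolynomial in
lemma key_factor {R : Type*} [CommRing R] (φ : ℤ_[p] →+* R)
    (hs : 1 ≤ s) (hA : IsHGCoeff p s a A) :
    ∃ E : LaurentPolynomial R,
      invert (Polynomial.toLaurent (((PowerSeries.mk A).trunc p).map φ)) =
        C (φ (A (dl p a))) * T (-(dl p a : ℤ)) *
          Polynomial.toLaurent (((PowerSeries.mk A).trunc p).map φ) +
        (p : LaurentPolynomial R) * E := by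
  classical
  set l := dl p a with hldef
  have hlp : l < p := dl_lt a
  set H : LaurentPolynomial R := Polynomial.toLaurent (((PowerSeries.mk A).trunc p).map φ)
    with hHdef
  have hH : H = ∑ k ∈ Finset.range p, C (φ (A k)) * T (k : ℤ) := by
    have ht : (PowerSeries.mk A).trunc p = ∑ k ∈ Finset.range p, Polynomial.monomial k (A k) := by
      rw [PowerSeries.trunc_apply, Finset.range_eq_Ico]
      exact Finset.sum_congr rfl fun k _ => by rw [PowerSeries.coeff_mk]
    rw [hHdef, ht, Polynomial.map_sum, map_sum]
    exact Finset.sum_congr rfl fun k _ => by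
      rw [Polynomial.map_monomial, Polynomial.toLaurent_C_mul_T]
  set I : Ideal (LaurentPolynomial R) := Ideal.span {(p : LaurentPolynomial R)} with hIdef
  set π := Ideal.Quotient.mk I with hπdef
  have hkill : ∀ x : ℤ_[p], (∃ z, x = 0 + p * z) → ∀ y : LaurentPolynomial R,
      π (C (φ x) * y) = 0 := by
    rintro x ⟨z, hz⟩ y
    have : C (φ x) * y = (p : LaurentPolynomial R) * (C (φ z) * y) := by
      rw [hz]
      rw [map_add, map_mul, map_zero, map_natCast, zero_add, map_mul, map_natCast]
      ring
    rw [this, map_mul]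
    have : π (p : LaurentPolynomial R) = 0 := by
      rw [hπdef, Ideal.Quotient.eq_zero_iff_mem, hIdef]
      exact Ideal.subset_span rfl
    rw [this, zero_mul]
  have main : π (invert H) = π (C (φ (A l)) * T (-(l : ℤ)) * H) := by
    have lhs1 : invert H = ∑ k ∈ Finset.range p, C (φ (A k)) * T (-(k : ℤ)) := by
      rw [hH, map_sum]
      exact Finset.sum_congr rfl fun k _ => by rw [map_mul, invert_C, invert_T]
    have rhs1 : C (φ (A l)) * T (-(l : ℤ)) * H =
        ∑ k ∈ Finset.range p, C (φ (A l)) * C (φ (A k)) * T ((k : ℤ) - l) := by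
      rw [hH, Finset.mul_sum]
      exact Finset.sum_congr rfl fun k _ => by rw [T_sub]; ring
    rw [lhs1, rhs1, map_sum, map_sum]
    have hsub : Finset.range (l + 1) ⊆ Finset.range p := by
      intro x hx
      simp only [Finset.mem_range] at hx ⊢
      omega
    have step1 : ∑ k ∈ Finset.range p, π (C (φ (A k)) * T (-(k : ℤ))) =
        ∑ k ∈ Finset.range (l + 1), π (C (φ (A k)) * T (-(k : ℤ))) := by
      refine (Finset.sum_subset hsub ?_).symm
      intro k hk hk'
      simp only [Finset.mem_range] at hk hk'
      exact hkill _ (A_vanish hs hA (by omega) hk) _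
    have step4 : ∑ k ∈ Finset.range p, π (C (φ (A l)) * C (φ (A k)) * T ((k : ℤ) - l)) =
        ∑ k ∈ Finset.range (l + 1), π (C (φ (A l)) * C (φ (A k)) * T ((k : ℤ) - l)) := by
      refine (Finset.sum_subset hsub ?_).symm
      intro k hk hk'
      simp only [Finset.mem_range] at hk hk'
      have : C (φ (A l)) * C (φ (A k)) * T ((k : ℤ) - l) =
          C (φ (A k)) * (C (φ (A l)) * T ((k : ℤ) - l)) := by ring
      rw [this]
      exact hkill _ (A_vanish hs hA (by omega) hk) _
    rw [step1, step4]
    have step2 : ∑ k ∈ Finset.range (l + 1), π (C (φ (A k)) * T (-(k : ℤ))) =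
        ∑ j ∈ Finset.range (l + 1), π (C (φ (A (l - j))) * T (-((l - j : ℕ) : ℤ))) := by
      exact (Finset.sum_range_reflect (fun k => π (C (φ (A k)) * T (-(k : ℤ)))) (l + 1)).symm
    rw [step2]
    refine Finset.sum_congr rfl fun j hj => ?_
    simp only [Finset.mem_range] at hj
    have hjl : j ≤ l := by omega
    obtain ⟨z, hz⟩ := A_reflect hs hA hjl
    have hT : (-((l - j : ℕ) : ℤ)) = (j : ℤ) - l := by omega
    rw [hT, hz]
    have : C (φ (A l * A j + p * z)) * T ((j : ℤ) - l) =
        C (φ (A l)) * C (φ (A j)) * T ((j : ℤ) - l) +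
          (p : LaurentPolynomial R) * (C (φ z) * T ((j : ℤ) - l)) := by
      rw [map_add, map_mul, map_mul, map_natCast, map_add, map_mul, map_mul, map_natCast]
      ring
    rw [this, map_add]
    have hp0 : π (p : LaurentPolynomial R) = 0 := by
      rw [hπdef, Ideal.Quotient.eq_zero_iff_mem, hIdef]
      exact Ideal.subset_span rfl
    have hz0 : π ((p : LaurentPolynomial R) * (C (φ z) * T ((j : ℤ) - l))) = 0 := by
      rw [map_mul, hp0, zero_mul]
    rw [hz0, add_zero]
  have hdiff : invert H - C (φ (A l)) * T (-(l : ℤ)) * H ∈ I := by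
    rw [← Ideal.Quotient.eq_zero_iff_mem, map_sub, main, sub_self]
  rw [hIdef, Ideal.mem_span_singleton] at hdiff
  obtain ⟨E, hE⟩ := hdiff
  exact ⟨E, by linear_combination hE⟩




variable {p : ℕ} [Fact p.Prime] {s : ℕ}

open LaurentPolynomial in
lemma T_prod {R : Type*} [CommRing R] (f : ℕ → ℤ) (t : Finset ℕ) :
    ∏ i ∈ t, (T (f i) : LaurentPolynomial R) = T (∑ i ∈ t, f i) := by
  induction t using Finset.cons_induction with
  | empty => simp
  | cons i t hi ih => rw [Finset.prod_cons, Finset.sum_cons, ih, T_add]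

open LaurentPolynomial in
lemma key_prod {R : Type*} [CommRing R] (φ : ℤ_[p] →+* R) (hs : 1 ≤ s) (r : ℕ)
    (aF : ℕ → ℤ_[p]) (AF : ℕ → ℕ → ℤ_[p]) (hAF : ∀ i, IsHGCoeff p s (aF i) (AF i)) :
    ∃ E : LaurentPolynomial R,
      invert (Polynomial.toLaurent
          ((∏ i ∈ Finset.range r, (PowerSeries.mk (AF i)).trunc p).map φ)) =
        C (∏ i ∈ Finset.range r, φ (AF i (dl p (aF i)))) *
          T (-(∑ i ∈ Finset.range r, (dl p (aF i) : ℤ))) *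
          Polynomial.toLaurent
            ((∏ i ∈ Finset.range r, (PowerSeries.mk (AF i)).trunc p).map φ) +
        (p : LaurentPolynomial R) * E := by
  classical
  set Hi : ℕ → LaurentPolynomial R :=
    fun i => Polynomial.toLaurent (((PowerSeries.mk (AF i)).trunc p).map φ) with hHi
  have hHprod : Polynomial.toLaurent
      ((∏ i ∈ Finset.range r, (PowerSeries.mk (AF i)).trunc p).map φ) =
      ∏ i ∈ Finset.range r, Hi i := by
    rw [Polynomial.map_prod, map_prod]
  set I : Ideal (LaurentPolynomial R) := Ideal.span {(p : LaurentPolynomial R)} with hIdef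
  set π := Ideal.Quotient.mk I with hπdef
  have hp0 : π (p : LaurentPolynomial R) = 0 := by
    rw [hπdef, Ideal.Quotient.eq_zero_iff_mem, hIdef]
    exact Ideal.subset_span rfl
  have main : π (invert (∏ i ∈ Finset.range r, Hi i)) =
      π (C (∏ i ∈ Finset.range r, φ (AF i (dl p (aF i)))) *
        T (-(∑ i ∈ Finset.range r, (dl p (aF i) : ℤ))) * ∏ i ∈ Finset.range r, Hi i) := by
    have hfac : ∀ i, π (invert (Hi i)) =
        π (C (φ (AF i (dl p (aF i)))) * T (-(dl p (aF i) : ℤ)) * Hi i) := by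
      intro i
      obtain ⟨E, hE⟩ := key_factor φ hs (hAF i)
      rw [hHi]
      have hz0 : π ((p : LaurentPolynomial R) * E) = 0 := by rw [map_mul, hp0, zero_mul]
      rw [hE, map_add, hz0, add_zero]
    calc π (invert (∏ i ∈ Finset.range r, Hi i))
        = ∏ i ∈ Finset.range r, π (invert (Hi i)) := by rw [map_prod, map_prod]
      _ = ∏ i ∈ Finset.range r, π (C (φ (AF i (dl p (aF i)))) * T (-(dl p (aF i) : ℤ)) * Hi i) :=
          Finset.prod_congr rfl fun i _ => hfac i
      _ = π (∏ i ∈ Finset.range r, (C (φ (AF i (dl p (aF i)))) * T (-(dl p (aF i) : ℤ)) * Hi i)) := by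
          rw [map_prod]
      _ = _ := by
          congr 1
          rw [Finset.prod_mul_distrib, Finset.prod_mul_distrib, map_prod, T_prod,
            ← Finset.sum_neg_distrib]
  rw [hHprod]
  have hdiff : invert (∏ i ∈ Finset.range r, Hi i) -
      C (∏ i ∈ Finset.range r, φ (AF i (dl p (aF i)))) *
        T (-(∑ i ∈ Finset.range r, (dl p (aF i) : ℤ))) * ∏ i ∈ Finset.range r, Hi i ∈ I := by
    rw [← Ideal.Quotient.eq_zero_iff_mem, map_sub, main, sub_self]
  rw [hIdef, Ideal.mem_span_singleton] at hdiff
  obtain ⟨E, hE⟩ := hdiff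
  exact ⟨E, by linear_combination hE⟩



end Aux


section RnAux

open LaurentPolynomial

variable (p : ℕ) [Fact p.Prime] (hW : Polynomial (Wp p)) (n : ℕ)

/-- `invert` as a ring homomorphism. -/
noncomputable def invertHom (R : Type*) [CommSemiring R] :
    LaurentPolynomial R →+* LaurentPolynomial R :=
  (LaurentPolynomial.invert (R := R)).toRingEquiv.toRingHom

lemma toRn_eq (f : Polynomial (Wp p)) :
    toRn p hW n f = mkRn p hW n (laurentOfPolyW p n f) := rfl

lemma laurentOfPolyW_X : laurentOfPolyW p n Polynomial.X = T 1 := by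
  simp [laurentOfPolyW]

lemma laurentOfPolyW_C (w : Wp p) :
    laurentOfPolyW p n (Polynomial.C w) =
      C (Ideal.Quotient.mk (Ideal.span {(p : Wp p) ^ n}) w) := by
  simp [laurentOfPolyW]

lemma hunit_all (s : ℕ) (hs : 1 ≤ s) (r : ℕ)
    (aF : ℕ → ℤ_[p]) (AF : ℕ → ℕ → ℤ_[p]) (hAF : ∀ i, IsHGCoeff p s (aF i) (AF i))
    (hhW : hW = (∏ i ∈ Finset.range r, (PowerSeries.mk (AF i)).trunc p).map (iota p)) :
    IsUnit (mkRn p hW n (LaurentPolynomial.invert (laurentOfPolyW p n hW))) := by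
  classical
  set ψ : ℤ_[p] →+* Qn p n :=
    (Ideal.Quotient.mk (Ideal.span {(p : Wp p) ^ n})).comp (iota p) with hψ
  have hrepr : laurentOfPolyW p n hW =
      Polynomial.toLaurent ((∏ i ∈ Finset.range r, (PowerSeries.mk (AF i)).trunc p).map ψ) := by
    rw [hhW]
    show Polynomial.toLaurent
        ((((∏ i ∈ Finset.range r, (PowerSeries.mk (AF i)).trunc p).map (iota p))).map
          (Ideal.Quotient.mk (Ideal.span {(p : Wp p) ^ n}))) = _
    rw [Polynomial.map_map]
  obtain ⟨E, hE⟩ := key_prod ψ hs r aF AF hAF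
  have hEq : LaurentPolynomial.invert (laurentOfPolyW p n hW) =
      C (∏ i ∈ Finset.range r, ψ (AF i (dl p (aF i)))) *
        T (-(∑ i ∈ Finset.range r, (dl p (aF i) : ℤ))) *
        Polynomial.toLaurent
          ((∏ i ∈ Finset.range r, (PowerSeries.mk (AF i)).trunc p).map ψ) +
      (p : LaurentPolynomial (Qn p n)) * E := by
    rw [hrepr]; exact hE
  rw [hEq, map_add (mkRn p hW n)]
  have hCu : IsUnit (mkRn p hW n
      (C (∏ i ∈ Finset.range r, ψ (AF i (dl p (aF i)))))) := by
    refine IsUnit.map _ (IsUnit.map _ ?_)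
    refine Finset.prod_induction _ IsUnit (fun _ _ => IsUnit.mul) isUnit_one ?_
    exact fun i _ => (isUnit_A_l hs (hAF i)).map ψ
  have hTu : IsUnit (mkRn p hW n
      (T (-(∑ i ∈ Finset.range r, (dl p (aF i) : ℤ))))) :=
    (isUnit_T _).map _
  have hHu : IsUnit (mkRn p hW n (Polynomial.toLaurent
      ((∏ i ∈ Finset.range r, (PowerSeries.mk (AF i)).trunc p).map ψ))) := by
    rw [← hrepr]
    exact IsLocalization.Away.algebraMap_isUnit (S := Rn p hW n) (laurentOfPolyW p n hW)
  have hU : IsUnit (mkRn p hW n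
      (C (∏ i ∈ Finset.range r, ψ (AF i (dl p (aF i)))) *
        T (-(∑ i ∈ Finset.range r, (dl p (aF i) : ℤ))) *
        Polynomial.toLaurent
          ((∏ i ∈ Finset.range r, (PowerSeries.mk (AF i)).trunc p).map ψ))) := by
    rw [map_mul, map_mul]
    exact (hCu.mul hTu).mul hHu
  have hpow : ((p : Rn p hW n)) ^ n = 0 := by
    have h2 : ((p : Qn p n)) ^ n = 0 := by
      have h2' : ((p : Qn p n)) = Ideal.Quotient.mk _ (p : Wp p) :=
        (map_natCast (Ideal.Quotient.mk (Ideal.span {(p : Wp p) ^ n})) p).symm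
      rw [h2', ← map_pow, Ideal.Quotient.eq_zero_iff_mem]
      exact Ideal.mem_span_singleton_self _
    have h3 : ((p : LaurentPolynomial (Qn p n))) ^ n = 0 := by
      have h3' : ((p : LaurentPolynomial (Qn p n))) = C (p : Qn p n) :=
        (map_natCast C p).symm
      rw [h3', ← map_pow, h2, map_zero]
    have h4 : ((p : Rn p hW n)) = mkRn p hW n (p : LaurentPolynomial (Qn p n)) :=
      (map_natCast (mkRn p hW n) p).symm
    rw [h4, ← map_pow, h3, map_zero]
  have hNil : IsNilpotent (mkRn p hW n ((p : LaurentPolynomial (Qn p n)) * E)) := by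
    refine ⟨n, ?_⟩
    rw [map_mul, mul_pow, map_natCast, hpow, zero_mul]
  exact hNil.isUnit_add_left_of_commute hU (Commute.all _ _)

/-- The involution `ω` on `R_n`. -/
noncomputable def omegaHom
    (hu : IsUnit (mkRn p hW n (LaurentPolynomial.invert (laurentOfPolyW p n hW)))) :
    Rn p hW n →+* Rn p hW n :=
  IsLocalization.Away.lift (g := (mkRn p hW n).comp (invertHom (Qn p n)))
    (laurentOfPolyW p n hW) hu

lemma omegaHom_mk
    (hu : IsUnit (mkRn p hW n (LaurentPolynomial.invert (laurentOfPolyW p n hW))))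
    (f : LaurentPolynomial (Qn p n)) :
    omegaHom p hW n hu (mkRn p hW n f) = mkRn p hW n (LaurentPolynomial.invert f) :=
  IsLocalization.Away.lift_eq (laurentOfPolyW p n hW) hu f

lemma rn_hom_ext {S : Type*} [CommRing S] (F G : Rn p hW n →+* S)
    (hC : ∀ q : Qn p n, F (mkRn p hW n (C q)) = G (mkRn p hW n (C q)))
    (hT : ∀ k : ℤ, F (mkRn p hW n (T k)) = G (mkRn p hW n (T k))) : F = G := by
  apply IsLocalization.ringHom_ext (Submonoid.powers (laurentOfPolyW p n hW))
  refine RingHom.ext fun f => ?_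
  show F (mkRn p hW n f) = G (mkRn p hW n f)
  induction f using LaurentPolynomial.induction_on' with
  | add f g hf hg => rw [map_add (mkRn p hW n), map_add F, map_add G, hf, hg]
  | C_mul_T k q => rw [map_mul (mkRn p hW n), map_mul F, map_mul G, hC, hT]

lemma rn_hom_T_eq {S : Type*} [CommRing S] (F G : Rn p hW n →+* S)
    (h1 : F (mkRn p hW n (T 1)) = G (mkRn p hW n (T 1)))
    (hm1 : F (mkRn p hW n (T (-1))) = G (mkRn p hW n (T (-1)))) (k : ℤ) :
    F (mkRn p hW n (T k)) = G (mkRn p hW n (T k)) := by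
  rcases le_or_gt 0 k with hk | hk
  · have hTk : (T k : LaurentPolynomial (Qn p n)) = T 1 ^ k.toNat := by
      rw [T_pow, mul_one, Int.toNat_of_nonneg hk]
    rw [hTk, map_pow (mkRn p hW n), map_pow F, map_pow G, h1]
  · have hTk : (T k : LaurentPolynomial (Qn p n)) = T (-1) ^ (-k).toNat := by
      rw [T_pow]
      congr 1
      omega
    rw [hTk, map_pow (mkRn p hW n), map_pow F, map_pow G, hm1]

end RnAux

/-- `h(t⁻¹)` is a unit in `R_n = (W/p^n)[t,t⁻¹,h(t)⁻¹]` for every `n ≥ 1`;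
consequently there are ring homomorphisms `ω_n : R_n → R_n` with `ω_n(f(t)) = f(t⁻¹)`,
which are involutions, commute with the reduction maps `R_{n+1} → R_n`, and hence induce
a ring involution of `W⟨t,t⁻¹,h(t)⁻¹⟩ = lim← R_n` sending `f(t)` to `f(t⁻¹)`. -/
theorem statement16 (p : ℕ) [Fact p.Prime] (s : ℕ) (hs : 1 ≤ s) (r : ℕ)
    (aF : ℕ → ℤ_[p]) (AF : ℕ → ℕ → ℤ_[p]) (hAF : ∀ i, IsHGCoeff p s (aF i) (AF i))
    (hW : Polynomial (Wp p))
    (hhW : hW = (∏ i ∈ Finset.range r, (PowerSeries.mk (AF i)).trunc p).map (iota p)) :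
    (∀ n : ℕ, 1 ≤ n →
      IsUnit (mkRn p hW n (LaurentPolynomial.invert (laurentOfPolyW p n hW)))) ∧
    ∃ ω : ∀ n : ℕ, Rn p hW n →+* Rn p hW n,
      (∀ (n : ℕ) (f : LaurentPolynomial (Qn p n)),
        ω n (mkRn p hW n f) = mkRn p hW n (LaurentPolynomial.invert f)) ∧
      (∀ n : ℕ, (ω n).comp (ω n) = RingHom.id _) ∧
      (∀ ρ : (∀ n : ℕ, Rn p hW (n + 1) →+* Rn p hW n),
        (∀ (n : ℕ) (f : Polynomial (Wp p)), ρ n (toRn p hW (n + 1) f) = toRn p hW n f) →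
        (∀ n : ℕ, ρ n (mkRn p hW (n + 1) (LaurentPolynomial.T (-1))) =
          mkRn p hW n (LaurentPolynomial.T (-1))) →
        (∀ n : ℕ, (ρ n).comp (ω (n + 1)) = (ω n).comp (ρ n)) ∧
        (∀ x : (∀ n : ℕ, Rn p hW n), (∀ n, ρ n (x (n + 1)) = x n) →
          ∀ n, ρ n (ω (n + 1) (x (n + 1))) = ω n (x n))) := by
  have hu : ∀ n : ℕ,
      IsUnit (mkRn p hW n (LaurentPolynomial.invert (laurentOfPolyW p n hW))) :=
    fun n => hunit_all p hW n s hs r aF AF hAF hhW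
  refine ⟨fun n _ => hu n, fun n => omegaHom p hW n (hu n),
    fun n f => omegaHom_mk p hW n (hu n) f, ?_, ?_⟩
  · intro n
    apply rn_hom_ext p hW n
    · intro q
      simp only [RingHom.comp_apply, RingHom.id_apply, omegaHom_mk,
        LaurentPolynomial.invert_C]
    · intro k
      simp only [RingHom.comp_apply, RingHom.id_apply, omegaHom_mk,
        LaurentPolynomial.invert_T, neg_neg]
  · intro ρ hρpoly hρT
    have hcomp : ∀ n : ℕ, (ρ n).comp (omegaHom p hW (n + 1) (hu (n + 1))) =
        (omegaHom p hW n (hu n)).comp (ρ n) := by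
      intro n
      have hρC : ∀ w : Wp p,
          ρ n (mkRn p hW (n + 1) (LaurentPolynomial.C
            (Ideal.Quotient.mk (Ideal.span {(p : Wp p) ^ (n + 1)}) w))) =
          mkRn p hW n (LaurentPolynomial.C
            (Ideal.Quotient.mk (Ideal.span {(p : Wp p) ^ n}) w)) := by
        intro w
        have h1 := hρpoly n (Polynomial.C w)
        rwa [toRn_eq, toRn_eq, laurentOfPolyW_C, laurentOfPolyW_C] at h1
      have hρT1 : ρ n (mkRn p hW (n + 1) (LaurentPolynomial.T 1)) =
          mkRn p hW n (LaurentPolynomial.T 1) := by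
        have h1 := hρpoly n Polynomial.X
        rwa [toRn_eq, toRn_eq, laurentOfPolyW_X, laurentOfPolyW_X] at h1
      apply rn_hom_ext p hW (n + 1)
      · intro q
        obtain ⟨w, rfl⟩ := Ideal.Quotient.mk_surjective q
        rw [RingHom.comp_apply, RingHom.comp_apply, omegaHom_mk,
          LaurentPolynomial.invert_C, hρC, omegaHom_mk, LaurentPolynomial.invert_C]
      · refine rn_hom_T_eq p hW (n + 1) _ _ ?_ ?_
        · rw [RingHom.comp_apply, RingHom.comp_apply, omegaHom_mk,
            LaurentPolynomial.invert_T, hρT n, hρT1, omegaHom_mk,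
            LaurentPolynomial.invert_T]
        · rw [RingHom.comp_apply, RingHom.comp_apply, omegaHom_mk,
            LaurentPolynomial.invert_T, neg_neg, hρT1, hρT n, omegaHom_mk,
            LaurentPolynomial.invert_T, neg_neg]
    refine ⟨hcomp, ?_⟩
    intro x hx n
    have h := DFunLike.congr_fun (hcomp n) (x (n + 1))
    simp only [RingHom.coe_comp, Function.comp_apply] at h
    rw [h, hx n]

end HGP
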